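/- Let G=(N,L) be a directed graph with weights w and potentials l, and suppose two demands share the same origin s and each is routed on a path satisfying the unique-shortest-path length conditions: along each routing path every edge (i,j) is tight (l(j) = l(i) + w(i,j)), and for every edge (i,j) not on a given demand's routing path whose head j is on that path, the strict inequality l(j) < l(i) + w(i,j) holds. Then the two routing paths cannot traverse two edge-disjoint subpaths between a common pair of nodes u and v; i.e., any two routing paths from the same origin that both visit nodes u and v coincide between u and v. -/

import Mathlib

lemma mem_zip_tail' {α : Type*} {P : List α} {a b : α} :
    (a, b) ∈ P.zip P.tail ↔ ∃ k, P[k]? = some a ∧ P[k+1]? = some b := by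
  induction P with
  | nil => simp
  | cons x xs ih =>
    cases xs with
    | nil => simp
    | cons y rest =>
      simp only [List.tail_cons] at ih ⊢
      rw [List.zip_cons_cons, List.mem_cons, ih]
      constructor
      · rintro (h | ⟨k, h1, h2⟩)
        · refine ⟨0, ?_, ?_⟩ <;> simp_all [Prod.ext_iff]
        · exact ⟨k+1, by simpa using h1, by simpa using h2⟩
      · rintro ⟨k, h1, h2⟩
        cases k with
        | zero =>
          left
          simp only [List.getElem?_cons_zero, Option.some.injEq] at h1
          simp only [List.getElem?_cons_succ, List.getElem?_cons_zero, Option.some.injEq] at h2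
          simp [h1, h2]
        | succ k => exact Or.inr ⟨k, by simpa using h1, by simpa using h2⟩

lemma rel_of_mem_zip_tail {α : Type*} {R : α → α → Prop} {P : List α} (h : P.Chain' R)
    {a b : α} (hab : (a, b) ∈ P.zip P.tail) : R a b := by
  obtain ⟨k, h1, h2⟩ := mem_zip_tail'.1 hab
  obtain ⟨hk1, e1⟩ := List.getElem?_eq_some_iff.1 h1
  obtain ⟨hk2, e2⟩ := List.getElem?_eq_some_iff.1 h2
  have := List.isChain_iff_getElem.1 h k (by omega)
  simpa [List.get_eq_getElem, e1, e2] using this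

lemma pred_eq_of_nodup {α : Type*} {P : List α} (hnd : P.Nodup) {a a' b : α}
    (h : (a, b) ∈ P.zip P.tail) (h' : (a', b) ∈ P.zip P.tail) : a = a' := by
  obtain ⟨k, h1, h2⟩ := mem_zip_tail'.1 h
  obtain ⟨k', h1', h2'⟩ := mem_zip_tail'.1 h'
  have hk : k + 1 = k' + 1 := by
    refine (List.getElem?_inj ?_ hnd).1 (h2.trans h2'.symm)
    exact (List.getElem?_eq_some_iff.1 h2).1
  have : k = k' := by omega
  subst this
  rw [h1] at h1'
  exact Option.some.inj h1'

lemma mem_zip_tail_of_infix {α : Type*} {p P : List α} (h : p <:+: P) {a b : α}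
    (hab : (a, b) ∈ p.zip p.tail) : (a, b) ∈ P.zip P.tail := by
  obtain ⟨s, t, rfl⟩ := h
  obtain ⟨k, h1, h2⟩ := mem_zip_tail'.1 hab
  have hk1 : k < p.length := (List.getElem?_eq_some_iff.1 h1).1
  refine mem_zip_tail'.2 ⟨s.length + k, ?_, ?_⟩
  · rw [List.append_assoc, List.getElem?_append, if_neg (by omega)]
    rw [show s.length + k - s.length = k by omega, List.getElem?_append, if_pos hk1]
    exact h1
  · rw [List.append_assoc, List.getElem?_append, if_neg (by omega)]
    rw [show s.length + k + 1 - s.length = k + 1 by omega, List.getElem?_append,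
      if_pos (List.getElem?_eq_some_iff.1 h2).1]
    exact h2

lemma eq_singleton_of_nodup {α : Type*} {l : List α} {v : α} (hnd : l.Nodup)
    (h1 : l.head? = some v) (h2 : l.getLast? = some v) : l = [v] := by
  match l with
  | [] => simp at h1
  | [x] => simp_all
  | x :: y :: ys =>
    simp only [List.head?_cons, Option.some.injEq] at h1
    rw [List.getLast?_cons_cons] at h2
    have hv : v ∈ y :: ys := by
      have := List.getLast?_eq_getLast (l := y :: ys) (by simp)
      rw [this, Option.some.injEq] at h2
      rw [← h2]; exact List.getLast_mem _
    rw [List.nodup_cons] at hnd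
    exact absurd (h1 ▸ hv) hnd.1

lemma concat_edge_mem {α : Type*} {p : List α} (h : p ≠ []) (v : α) :
    (p.getLast h, v) ∈ (p ++ [v]).zip (p ++ [v]).tail := by
  refine mem_zip_tail'.2 ⟨p.length - 1, ?_, ?_⟩
  · rw [List.getElem?_append, if_pos (by have := List.length_pos_iff.2 h; omega)]
    rw [← List.getLast?_eq_getElem?, List.getLast?_eq_getLast (l := p) h]
  · rw [show p.length - 1 + 1 = p.length from by have := List.length_pos_iff.2 h; omega]
    exact List.getElem?_concat_length (l := p) (a := v)

lemma head?_append_ne {α : Type*} {l l' : List α} (h : l ≠ []) :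
    (l ++ l').head? = l.head? := by
  cases l with
  | nil => simp at h
  | cons x xs => rfl


/-- Sub-path consistency of unique shortest path routing: two simple routing paths from
the same origin `s`, each satisfying the unique-shortest-path length conditions
(all path edges tight; strict inequality on edges entering visited nodes that are not
path edges; weak inequality on all edges), coincide on any common subpath endpoints:
a subpath of one from `u` to `v` equals a subpath of the other from `u` to `v`. -/
theorem subpath_optimality {V : Type} [DecidableEq V]
    (L : V → V → Prop) (w : V → V → ℝ) (l : V → ℝ) (s : V) (hls : l s = 0)
    (hfeas : ∀ i j, L i j → l j ≤ l i + w i j)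
    (P₁ P₂ : List V) (u v : V)
    (hP₁s : P₁.head? = some s) (hP₂s : P₂.head? = some s)
    (hchain₁ : P₁.Chain' L) (hchain₂ : P₂.Chain' L)
    (hnd₁ : P₁.Nodup) (hnd₂ : P₂.Nodup)
    (htight₁ : ∀ e ∈ P₁.zip P₁.tail, l e.2 = l e.1 + w e.1 e.2)
    (htight₂ : ∀ e ∈ P₂.zip P₂.tail, l e.2 = l e.1 + w e.1 e.2)
    (hstrict₁ : ∀ i j, L i j → j ∈ P₁ → (i, j) ∉ P₁.zip P₁.tail → l j < l i + w i j)
    (hstrict₂ : ∀ i j, L i j → j ∈ P₂ → (i, j) ∉ P₂.zip P₂.tail → l j < l i + w i j)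
    (p q : List V)
    (hp : p <:+: P₁) (hq : q <:+: P₂)
    (hpu : p.head? = some u) (hpv : p.getLast? = some v)
    (hqu : q.head? = some u) (hqv : q.getLast? = some v) :
    p = q := by
  revert q v hp hpu hpv hq hqu hqv
  induction p using List.reverseRecOn with
  | nil =>
    intro v q hp hq hpu
    simp at hpu
  | append_singleton p' v ih =>
    intro v' q hp hq hpu hpv hqu hqv
    rw [List.getLast?_concat] at hpv
    obtain rfl : v = v' := Option.some.inj hpv
    rcases eq_or_ne p' [] with rfl | hne
    · simp only [List.nil_append, List.head?_cons, Option.some.injEq] at hpu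
      obtain rfl : v = u := hpu
      exact (eq_singleton_of_nodup (List.Nodup.sublist hq.sublist hnd₂) hqu hqv).symm
    · obtain (rfl | ⟨q', b, rfl⟩) := q.eq_nil_or_concat
      · simp at hqu
      rw [List.concat_eq_append] at hq hqu hqv ⊢
      rw [List.getLast?_concat] at hqv
      obtain rfl : v = b := (Option.some.inj hqv).symm
      rcases eq_or_ne q' [] with rfl | hq'ne
      · simp only [List.nil_append, List.head?_cons, Option.some.injEq] at hqu
        obtain rfl : v = u := hqu
        have hsing := eq_singleton_of_nodup (List.Nodup.sublist hp.sublist hnd₁) hpu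
          (by rw [List.getLast?_concat])
        exact absurd (by simpa using hsing) hne
      · have e1 : (p'.getLast hne, v) ∈ P₁.zip P₁.tail :=
          mem_zip_tail_of_infix hp (concat_edge_mem hne v)
        have e2 : (q'.getLast hq'ne, v) ∈ P₂.zip P₂.tail :=
          mem_zip_tail_of_infix hq (concat_edge_mem hq'ne v)
        have hii : p'.getLast hne = q'.getLast hq'ne := by
          by_contra hcon
          have hL : L (q'.getLast hq'ne) v := rel_of_mem_zip_tail hchain₂ e2
          have hv1 : v ∈ P₁ := List.mem_of_mem_tail (List.of_mem_zip e1).2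
          have hnm : (q'.getLast hq'ne, v) ∉ P₁.zip P₁.tail :=
            fun hmem => hcon (pred_eq_of_nodup hnd₁ e1 hmem)
          have h1 := hstrict₁ _ v hL hv1 hnm
          have h2 := htight₂ (q'.getLast hq'ne, v) e2
          simp only at h2
          linarith
        have key : p' = q' := by
          refine ih (p'.getLast hne) q' ?_ ?_ ?_ ?_ ?_ ?_
          · exact ((List.prefix_append p' [v]).isInfix).trans hp
          · exact ((List.prefix_append q' [v]).isInfix).trans hq
          · rwa [head?_append_ne hne] at hpu
          · exact List.getLast?_eq_getLast (l := p') hne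
          · rwa [head?_append_ne hq'ne] at hqu
          · rw [hii]; exact List.getLast?_eq_getLast (l := q') hq'ne
        rw [key]
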